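/- Let b ≥ 2 be an integer, let ξ ∈ (0,1) be an irrational real number with base-b expansion 0·a₁a₂⋯, and let 𝐚 = a₁a₂⋯ be its digit sequence. Then the Diophantine exponent of 𝐚 is at most the irrationality exponent of ξ: dio(𝐚) ≤ μ(ξ). -/

import Mathlib

open Filter

noncomputable section

/-- The `j`-th digit (j ≥ 1) of the base-`b` expansion of the fractional part of `ξ`. -/
def digit (b : ℕ) (ξ : ℝ) (j : ℕ) : ℕ := (⌊Int.fract ξ * (b : ℝ) ^ j⌋ % (b : ℤ)).toNat

/-- The digit sequence `a₁ a₂ a₃ ⋯` of the base-`b` expansion of `ξ` (index `n` gives `a_{n+1}`). -/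
def digitSeq (b : ℕ) (ξ : ℝ) (n : ℕ) : ℕ := digit b ξ (n + 1)

/-- Subword complexity of an infinite word. -/
def wordComplexity {A : Type*} (a : ℕ → A) (n : ℕ) : ℕ :=
  Set.ncard {w : Fin n → A | ∃ j : ℕ, ∀ i : Fin n, w i = a (j + i)}

/-- Subword complexity `p(ξ, b, n)` of the base-`b` expansion of `ξ`. -/
def realComplexity (b : ℕ) (ξ : ℝ) (n : ℕ) : ℕ := wordComplexity (digitSeq b ξ) n

/-- Exponents `ρ` for which `|ξ - p/q| < q^(-ρ)` has infinitely many rational solutions. -/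
def muSet (ξ : ℝ) : Set ℝ :=
  {ρ : ℝ | {r : ℚ | |ξ - (r : ℝ)| < 1 / (r.den : ℝ) ^ ρ}.Infinite}

/-- The irrationality exponent of a real number. -/
def mu (ξ : ℝ) : EReal := sSup ((fun ρ : ℝ => (ρ : EReal)) '' muSet ξ)

/-- Fractional power `V^x` of a finite word. -/
def wordPow {A : Type*} (V : List A) (x : ℝ) : List A :=
  (List.replicate ⌊x⌋₊ V).flatten ++ V.take ⌈(x - (⌊x⌋₊ : ℝ)) * (V.length : ℝ)⌉₊

/-- The prefix of length `n` of an infinite word. -/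
def prefixWord {A : Type*} (a : ℕ → A) (n : ℕ) : List A := (List.range n).map a

/-- `L` is a prefix of the infinite word `a`. -/
def IsPrefixSeq {A : Type*} (a : ℕ → A) (L : List A) : Prop := L = prefixWord a L.length

/-- The set of exponents defining the Diophantine exponent of an infinite word. -/
def dioSet {A : Type*} (a : ℕ → A) : Set ℝ :=
  {ρ : ℝ | ∀ m : ℕ, ∃ (U V : List A) (w : ℝ), V ≠ [] ∧ 0 < w ∧
    m ≤ (U ++ wordPow V w).length ∧ IsPrefixSeq a (U ++ wordPow V w) ∧
    ρ ≤ ((U ++ wordPow V w).length : ℝ) / ((U ++ V).length : ℝ)}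

/-- The Diophantine exponent of an infinite word. -/
def dio {A : Type*} (a : ℕ → A) : EReal := sSup ((fun ρ : ℝ => (ρ : EReal)) '' dioSet a)

/-- The set of exponents defining the initial critical exponent of an infinite word. -/
def iceSet {A : Type*} (a : ℕ → A) : Set ℝ :=
  {ρ : ℝ | 0 < ρ ∧ ∀ m : ℕ, ∃ n : ℕ, m ≤ n ∧ 0 < n ∧
    IsPrefixSeq a (wordPow (prefixWord a n) ρ)}

/-- The initial critical exponent of an infinite word. -/
def ice {A : Type*} (a : ℕ → A) : EReal := sSup ((fun ρ : ℝ => (ρ : EReal)) '' iceSet a)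

/-- An infinite word is eventually periodic. -/
def EventuallyPeriodic {A : Type*} (a : ℕ → A) : Prop :=
  ∃ T : ℕ, 0 < T ∧ ∃ N : ℕ, ∀ n : ℕ, N ≤ n → a (n + T) = a n

/-- A Sturmian word: an infinite binary word of subword complexity `n + 1`. -/
def IsSturmian (s : ℕ → Fin 2) : Prop := ∀ n : ℕ, 1 ≤ n → wordComplexity s n = n + 1

/-- The slope of a binary word: the frequency of the letter `1`. -/
def HasSlope (s : ℕ → Fin 2) (α : ℝ) : Prop :=
  Tendsto (fun n : ℕ => (((prefixWord s n).count 1 : ℕ) : ℝ) / (n : ℝ)) atTop (nhds α)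

/-- The iterated Gauss map orbit: complete quotients of the continued fraction of `ξ`. -/
def cfTail (ξ : ℝ) : ℕ → ℝ
  | 0 => ξ
  | n + 1 => 1 / Int.fract (cfTail ξ n)

/-- The `n`-th partial quotient of the continued fraction expansion of `ξ`. -/
def partialQuotient (ξ : ℝ) (n : ℕ) : ℤ := ⌊cfTail ξ n⌋


/- ===== auxiliary lemmas ===== -/

lemma prefixSeq_getElem {A : Type*} {a : ℕ → A} {L : List A} (h : IsPrefixSeq a L)
    {j : ℕ} (hj : j < L.length) : L[j] = a j := by
  rw [List.getElem_of_eq h hj]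
  simp [prefixWord]

lemma flatten_replicate_getElem {A : Type*} {V : List A} (hV : V ≠ []) :
    ∀ (k i : ℕ) (h : i < ((List.replicate k V).flatten).length),
      ((List.replicate k V).flatten)[i] =
        V[i % V.length]'(Nat.mod_lt _ (List.length_pos_iff.mpr hV)) := by
  intro k
  induction k with
  | zero => intro i h; simp at h
  | succ k ih =>
    intro i h
    have he : (List.replicate (k+1) V).flatten = V ++ (List.replicate k V).flatten := by
      rw [List.replicate_succ, List.flatten_cons]
    have h2 : i < (V ++ (List.replicate k V).flatten).length := by
      rw [← he]; exact h
    rw [List.getElem_of_eq he h]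
    rcases lt_or_ge i V.length with hi | hi
    · rw [List.getElem_append_left hi]
      congr 1
      exact (Nat.mod_eq_of_lt hi).symm
    · have h' : i - V.length < ((List.replicate k V).flatten).length := by
        simp only [List.length_append] at h2
        omega
      rw [List.getElem_append_right hi, ih (i - V.length) h']
      congr 1
      exact (Nat.mod_eq_sub_mod hi).symm

lemma wordPow_isPrefix {A : Type*} (V : List A) (w : ℝ) :
    wordPow V w <+: (List.replicate (⌊w⌋₊ + 1) V).flatten := by
  rw [List.replicate_succ', List.flatten_append]
  simp only [wordPow, List.flatten, List.append_eq, List.append_nil]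
  exact (List.prefix_append_right_inj _).mpr (List.take_prefix _ _)

lemma wordPow_getElem {A : Type*} {V : List A} (hV : V ≠ []) (w : ℝ) {i : ℕ}
    (h : i < (wordPow V w).length) :
    (wordPow V w)[i] = V[i % V.length]'(Nat.mod_lt _ (List.length_pos_iff.mpr hV)) := by
  rw [(wordPow_isPrefix V w).getElem h]
  exact flatten_replicate_getElem hV _ i _

lemma periodicity {A : Type*} {a : ℕ → A} {U V : List A} {w : ℝ} (hV : V ≠ [])
    (hpref : IsPrefixSeq a (U ++ wordPow V w)) :
    ∀ j, U.length ≤ j → j + V.length < (U ++ wordPow V w).length →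
      a (j + V.length) = a j := by
  intro j h1 h2
  have hs : 0 < V.length := List.length_pos_iff.mpr hV
  have hlen : (U ++ wordPow V w).length = U.length + (wordPow V w).length := by simp
  have hj : j < (U ++ wordPow V w).length := by omega
  rw [← prefixSeq_getElem hpref hj, ← prefixSeq_getElem hpref h2]
  have hw1 : j - U.length < (wordPow V w).length := by omega
  have hw2 : j + V.length - U.length < (wordPow V w).length := by omega
  rw [List.getElem_append_right h1,
    List.getElem_append_right (by omega : U.length ≤ j + V.length)]
  rw [wordPow_getElem hV w hw1, wordPow_getElem hV w hw2]
  congr 1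
  rw [show j + V.length - U.length = (j - U.length) + V.length by omega,
    Nat.add_mod_right]

lemma digitSeq_real {b : ℕ} (hb : 2 ≤ b) {ξ : ℝ} (hξ : ξ ∈ Set.Ioo (0:ℝ) 1) (j : ℕ) :
    Int.fract (ξ * (b:ℝ)^(j+1)) =
      (b:ℝ) * Int.fract (ξ * (b:ℝ)^j) - ((digitSeq b ξ j : ℤ) : ℝ) := by
  have hbpos : (0:ℝ) < b := by positivity
  set t : ℝ := Int.fract (ξ * (b:ℝ)^j) with ht
  have ht0 : 0 ≤ t := Int.fract_nonneg _
  have ht1 : t < 1 := Int.fract_lt_one _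
  have hsplit : ξ * (b:ℝ)^(j+1) = ((b * ⌊ξ * (b:ℝ)^j⌋ : ℤ) : ℝ) + (b:ℝ) * t := by
    rw [ht, Int.fract]
    push_cast
    ring
  have hD0 : (0:ℤ) ≤ ⌊(b:ℝ) * t⌋ := Int.floor_nonneg.mpr (by positivity)
  have hDb : ⌊(b:ℝ) * t⌋ < (b:ℤ) := by
    rw [Int.floor_lt]
    push_cast
    nlinarith
  have hfloor : ⌊ξ * (b:ℝ)^(j+1)⌋ = b * ⌊ξ * (b:ℝ)^j⌋ + ⌊(b:ℝ) * t⌋ := by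
    rw [hsplit, Int.floor_intCast_add]
  have hfr : Int.fract ξ = ξ := Int.fract_eq_self.mpr ⟨hξ.1.le, hξ.2⟩
  have hdig : (digitSeq b ξ j : ℤ) = ⌊(b:ℝ) * t⌋ := by
    unfold digitSeq digit
    rw [hfr, hfloor, add_comm, Int.add_mul_emod_self_left,
      Int.emod_eq_of_lt hD0 hDb, Int.toNat_of_nonneg hD0]
  rw [hdig, hsplit, Int.fract_intCast_add, Int.fract]

lemma fract_period {b : ℕ} (hb : 2 ≤ b) {ξ : ℝ} (hξ : ξ ∈ Set.Ioo (0:ℝ) 1)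
    {r s n : ℕ} (hs : 0 < s) (hrs : r + s ≤ n)
    (hper : ∀ j, r ≤ j → j + s < n → digitSeq b ξ (j + s) = digitSeq b ξ j) :
    |Int.fract (ξ * (b:ℝ)^(r+s)) - Int.fract (ξ * (b:ℝ)^r)| * (b:ℝ)^(n - (r+s)) < 1 := by
  have hbpos : (0:ℝ) < b := by positivity
  set t : ℕ → ℝ := fun j => Int.fract (ξ * (b:ℝ)^j) with htdef
  have hrec : ∀ j, t (j+1) = (b:ℝ) * t j - ((digitSeq b ξ j : ℤ) : ℝ) :=
    fun j => digitSeq_real hb hξ j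
  have hu : ∀ i, r + i + s ≤ n →
      t (r + i + s) - t (r + i) = (b:ℝ)^i * (t (r+s) - t r) := by
    intro i
    induction i with
    | zero => intro _; simp
    | succ i ih =>
      intro h
      have h' : r + i + s ≤ n := by omega
      have hlt : (r + i) + s < n := by omega
      have e1 : r + (i+1) + s = (r + i + s) + 1 := by omega
      have e2 : r + (i+1) = (r + i) + 1 := by omega
      rw [e1, e2, hrec, hrec]
      have hdd : digitSeq b ξ (r + i + s) = digitSeq b ξ (r + i) :=
        hper (r + i) (by omega) hlt
      rw [hdd]
      have hih := ih h'
      rw [pow_succ]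
      nlinarith [hih]
  have hfin := hu (n - (r + s)) (by omega)
  have hn' : r + (n - (r+s)) + s = n := by omega
  rw [hn'] at hfin
  have habs : |t n - t (r + (n - (r+s)))| < 1 := by
    have a1 : (0:ℝ) ≤ t n := Int.fract_nonneg _
    have a2 : t n < 1 := Int.fract_lt_one _
    have b1 : (0:ℝ) ≤ t (r + (n - (r+s))) := Int.fract_nonneg _
    have b2 : t (r + (n - (r+s))) < 1 := Int.fract_lt_one _
    rw [abs_sub_lt_iff]
    constructor <;> linarith
  rw [hfin] at habs
  have hbe : (0:ℝ) ≤ (b:ℝ)^(n - (r+s)) := by positivity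
  calc |t (r+s) - t r| * (b:ℝ)^(n - (r+s))
      = |(b:ℝ)^(n - (r+s)) * (t (r+s) - t r)| := by
        rw [abs_mul, abs_of_nonneg hbe]; ring
    _ < 1 := habs

lemma nat_ineq {b r s e : ℕ} (hb : 2 ≤ b) (hs : 0 < s) (he : 0 < e) :
    (b^r * (b^s - 1))^(r+s+e) < (b^(r+e) * (b^s - 1))^(r+s) := by
  set c := b^s - 1 with hc
  have hbs : 2 ≤ b^s := le_trans hb (Nat.le_self_pow hs.ne' b)
  have hc1 : 1 ≤ c := by omega
  have hcb : c < b^s := by omega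
  calc (b^r * c)^(r+s+e)
      = b^(r*(r+s+e)) * (c^(r+s) * c^e) := by
        rw [mul_pow, ← pow_mul, ← pow_add]
    _ < b^(r*(r+s+e)) * (c^(r+s) * (b^s)^e) := by
        have h1 : c^e < (b^s)^e := Nat.pow_lt_pow_left hcb he.ne'
        have h2 : 0 < b^(r*(r+s+e)) := Nat.pow_pos (by omega)
        have h3 : 0 < c^(r+s) := Nat.pow_pos (by omega)
        exact Nat.mul_lt_mul_of_le_of_lt le_rfl
          (Nat.mul_lt_mul_of_le_of_lt le_rfl h1 h3) h2
    _ = (b^(r+e) * c)^(r+s) := by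
        rw [mul_pow, ← pow_mul, ← pow_mul,
          show (r+e)*(r+s) = r*(r+s+e) + s*e by ring, pow_add]
        ring

lemma rho_mem_muSet {b : ℕ} (hb : 2 ≤ b) {ξ : ℝ} (hξ : ξ ∈ Set.Ioo (0:ℝ) 1)
    (hirr : Irrational ξ) {ρ : ℝ} (hρ2 : 2 < ρ) (hdio : ρ ∈ dioSet (digitSeq b ξ)) :
    ρ ∈ muSet ξ := by
  have hρ0 : (0:ℝ) ≤ ρ := by linarith
  have key : ∀ m : ℕ, ∃ q : ℚ, |ξ - (q:ℝ)| < 1 / (q.den : ℝ)^ρ ∧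
      |ξ - (q:ℝ)| < 1 / (m + 1 : ℝ) := by
    intro m
    obtain ⟨U, V, w, hV, hw, hm, hpref, hle⟩ := hdio (2 * (m + 1))
    set r := U.length with hrdef
    set s := V.length with hsdef
    set n := (U ++ wordPow V w).length with hndef
    have hs : 0 < s := List.length_pos_iff.mpr hV
    have hUV : (U ++ V).length = r + s := by rw [List.length_append, hrdef, hsdef]
    rw [hUV] at hle
    have hrs_pos : 0 < r + s := by omega
    have hrspos' : (0:ℝ) < ((r+s:ℕ):ℝ) := by exact_mod_cast hrs_pos
    have h2rs : 2 * (r + s) < n := by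
      have h1 : (2:ℝ) < (n:ℝ)/((r+s:ℕ):ℝ) := lt_of_lt_of_le hρ2 hle
      rw [lt_div_iff₀ hrspos'] at h1
      have h2 : ((2*(r+s):ℕ):ℝ) < (n:ℝ) := by push_cast at h1 ⊢; linarith
      exact_mod_cast h2
    have hrsn : r + s ≤ n := by omega
    set N := n - (r + s) with hNdef
    have hN1 : 0 < N := by omega
    have hper : ∀ j, r ≤ j → j + s < n → digitSeq b ξ (j + s) = digitSeq b ξ j :=
      periodicity hV hpref
    have hkey := fract_period hb hξ hs hrsn hper
    set Δ : ℤ := ⌊ξ * (b:ℝ)^(r+s)⌋ - ⌊ξ * (b:ℝ)^r⌋ with hΔ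
    set Qz : ℤ := (b:ℤ)^r * ((b:ℤ)^s - 1) with hQz
    have hbs2 : (2:ℤ) ≤ (b:ℤ)^s := by
      calc (2:ℤ) ≤ (b:ℤ) := by exact_mod_cast hb
        _ ≤ (b:ℤ)^s := le_self_pow₀ (by omega) hs.ne'
    have hQpos : 0 < Qz := by
      rw [hQz]
      apply mul_pos (pow_pos (by omega) r)
      omega
    set q : ℚ := (Δ : ℚ) / (Qz : ℚ) with hq
    have hden : (q.den : ℤ) ∣ Qz := by
      rw [hq, ← Rat.divInt_eq_div]
      exact Rat.den_dvd Δ Qz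
    have hden_le : (q.den : ℤ) ≤ Qz := Int.le_of_dvd hQpos hden
    have hQr : ((Qz : ℤ) : ℝ) = (b:ℝ)^(r+s) - (b:ℝ)^r := by
      rw [hQz]
      push_cast
      ring
    have hQrpos : (0:ℝ) < ((Qz:ℤ) : ℝ) := by exact_mod_cast hQpos
    have hqcast : (q : ℝ) = ((Δ:ℤ):ℝ) / ((Qz:ℤ):ℝ) := by
      rw [hq]
      push_cast
      ring
    set u : ℝ := Int.fract (ξ * (b:ℝ)^(r+s)) - Int.fract (ξ * (b:ℝ)^r) with hu
    have hdiff : ξ - (q:ℝ) = u / ((Qz:ℤ) : ℝ) := by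
      rw [hqcast, hu, eq_div_iff hQrpos.ne', sub_mul,
        div_mul_cancel₀ _ hQrpos.ne', hQr, hΔ]
      simp only [Int.fract]
      push_cast
      ring
    have habs : |ξ - (q:ℝ)| = |u| / ((Qz:ℤ) : ℝ) := by
      rw [hdiff, abs_div, abs_of_pos hQrpos]
    have hbN : (0:ℝ) < (b:ℝ)^N := by positivity
    have humabs : |u| < 1 / (b:ℝ)^N := by
      rw [lt_div_iff₀ hbN]
      exact hkey
    have hnum : (((Qz:ℤ)):ℝ)^(n:ℕ) < ((b:ℝ)^N * ((Qz:ℤ):ℝ))^(r+s) := by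
      have hnat := nat_ineq (b := b) (r := r) (s := s) (e := N) hb hs hN1
      have hnn : r + s + N = n := by omega
      rw [hnn] at hnat
      have hbs2' : 1 ≤ b^s := Nat.one_le_pow _ _ (by omega)
      have hcast : ((b^r * (b^s - 1) : ℕ) : ℝ) = ((Qz:ℤ) : ℝ) := by
        rw [hQz]
        push_cast [hbs2']
        ring
      have hcast2 : ((b^(r+N) * (b^s - 1) : ℕ) : ℝ) = (b:ℝ)^N * ((Qz:ℤ):ℝ) := by
        rw [hQz]
        push_cast [hbs2']
        ring
      calc (((Qz:ℤ)):ℝ)^(n:ℕ) = ((b^r * (b^s - 1) : ℕ) : ℝ)^(n:ℕ) := by rw [hcast]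
        _ < ((b^(r+N) * (b^s - 1) : ℕ) : ℝ)^(r+s) := by
            rw [← Nat.cast_pow, ← Nat.cast_pow]
            exact_mod_cast hnat
        _ = ((b:ℝ)^N * ((Qz:ℤ):ℝ))^(r+s) := by rw [hcast2]
    have hQ1 : (1:ℝ) ≤ ((Qz:ℤ):ℝ) := by exact_mod_cast hQpos
    have hchain : ((q.den : ℝ))^ρ < (b:ℝ)^N * ((Qz:ℤ):ℝ) := by
      have h1 : ((q.den : ℝ))^ρ ≤ (((Qz:ℤ):ℝ))^ρ := by
        apply Real.rpow_le_rpow (by positivity) _ hρ0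
        exact_mod_cast hden_le
      have h2 : (((Qz:ℤ):ℝ))^ρ ≤ (((Qz:ℤ):ℝ))^((n:ℝ)/((r+s:ℕ):ℝ)) :=
        Real.rpow_le_rpow_of_exponent_le hQ1 hle
      have h3 : (((Qz:ℤ):ℝ))^((n:ℝ)/((r+s:ℕ):ℝ)) < (b:ℝ)^N * ((Qz:ℤ):ℝ) := by
        have hB0 : (0:ℝ) ≤ (b:ℝ)^N * ((Qz:ℤ):ℝ) := by positivity
        apply lt_of_pow_lt_pow_left₀ (r+s) hB0
        have hpoweq : ((((Qz:ℤ):ℝ))^((n:ℝ)/((r+s:ℕ):ℝ)))^(r+s) = (((Qz:ℤ)):ℝ)^(n:ℕ) := by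
          rw [← Real.rpow_natCast ((((Qz:ℤ):ℝ))^((n:ℝ)/((r+s:ℕ):ℝ))) (r+s),
            ← Real.rpow_mul hQrpos.le,
            div_mul_cancel₀ _ hrspos'.ne',
            Real.rpow_natCast]
        rw [hpoweq]
        exact hnum
      exact lt_of_le_of_lt (le_trans h1 h2) h3
    refine ⟨q, ?_, ?_⟩
    · rw [habs, div_lt_div_iff₀ hQrpos (by positivity : (0:ℝ) < ((q.den:ℝ))^ρ)]
      have hmul := mul_lt_mul'' humabs hchain (abs_nonneg u) (by positivity)
      calc |u| * ((q.den:ℝ))^ρ < (1/(b:ℝ)^N) * ((b:ℝ)^N * ((Qz:ℤ):ℝ)) := hmul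
        _ = 1 * ((Qz:ℤ):ℝ) := by field_simp
    · have hmN : m + 1 < b^N := by
        have hNm : m + 1 ≤ N := by omega
        have hlt2 : N < 2^N := Nat.lt_two_pow_self (n := N)
        have hle2 : 2^N ≤ b^N := Nat.pow_le_pow_left hb N
        omega
      have hm1 : (m + 1 : ℝ) ≤ (b:ℝ)^N * ((Qz:ℤ):ℝ) := by
        have hb' : ((m:ℝ) + 1) ≤ (b:ℝ)^N := by
          have hc : ((m + 1 : ℕ):ℝ) ≤ ((b^N : ℕ):ℝ) := by exact_mod_cast hmN.le
          push_cast at hc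
          exact hc
        calc (m:ℝ) + 1 ≤ (b:ℝ)^N := hb'
          _ = (b:ℝ)^N * 1 := by ring
          _ ≤ (b:ℝ)^N * ((Qz:ℤ):ℝ) := by
            exact mul_le_mul_of_nonneg_left hQ1 (by positivity)
      rw [habs]
      calc |u| / ((Qz:ℤ):ℝ) < (1 / (b:ℝ)^N) / ((Qz:ℤ):ℝ) :=
            (div_lt_div_iff_of_pos_right hQrpos).mpr humabs
        _ = 1 / ((b:ℝ)^N * ((Qz:ℤ):ℝ)) := by rw [div_div]
        _ ≤ 1 / (m + 1 : ℝ) := one_div_le_one_div_of_le (by positivity) hm1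
  rw [muSet, Set.mem_setOf_eq]
  by_contra hfin
  rw [Set.not_infinite] at hfin
  obtain ⟨q₀, hq₀, _⟩ := key 0
  have hne : (hfin.toFinset.image fun q : ℚ => |ξ - (q:ℝ)|).Nonempty := by
    refine ⟨|ξ - (q₀:ℝ)|, Finset.mem_image_of_mem _ ?_⟩
    rw [Set.Finite.mem_toFinset]
    exact hq₀
  set δ := (hfin.toFinset.image fun q : ℚ => |ξ - (q:ℝ)|).min' hne with hδ
  have hδpos : 0 < δ := by
    obtain ⟨q', hq', hq'eq⟩ := Finset.mem_image.mp (Finset.min'_mem _ hne)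
    rw [hδ, ← hq'eq, abs_pos, sub_ne_zero]
    exact hirr.ne_rat q'
  obtain ⟨m, hmδ⟩ := exists_nat_one_div_lt hδpos
  obtain ⟨q, hqS, hqsmall⟩ := key m
  have hge : δ ≤ |ξ - (q:ℝ)| := by
    apply Finset.min'_le
    apply Finset.mem_image_of_mem
    rw [Set.Finite.mem_toFinset]
    exact hqS
  have hlt : |ξ - (q:ℝ)| < δ := lt_trans hqsmall hmδ
  linarith

/-- The Diophantine exponent of the base-`b` digit sequence of an irrational
`ξ ∈ (0,1)` is at most the irrationality exponent of `ξ`. -/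
theorem dio_le_mu (b : ℕ) (hb : 2 ≤ b) (ξ : ℝ) (hξ : ξ ∈ Set.Ioo (0 : ℝ) 1)
    (hirr : Irrational ξ) :
    dio (digitSeq b ξ) ≤ mu ξ := by
  have h2mem : (2:ℝ) ∈ muSet ξ := by
    have h := Real.infinite_rat_abs_sub_lt_one_div_den_sq_of_irrational hirr
    rw [muSet, Set.mem_setOf_eq]
    convert h using 3 with q
    rw [show (2:ℝ) = ((2:ℕ):ℝ) by norm_num, Real.rpow_natCast]
  refine sSup_le ?_
  rintro x ⟨ρ, hρ, rfl⟩
  rcases le_or_gt ρ 2 with hc | hc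
  · calc ((ρ:ℝ):EReal) ≤ ((2:ℝ):EReal) := by exact_mod_cast hc
      _ ≤ mu ξ := le_sSup ⟨2, h2mem, rfl⟩
  · exact le_sSup ⟨ρ, rho_mem_muSet hb hξ hirr hc hρ, rfl⟩

end
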